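/- Let n ≥ 3 be odd and let σ ∈ S_n be an n-cycle. Then σ admits a transitive factorization into 3-cycles, and the minimal number of 3-cycles in a transitive factorization of σ is (n−1)/2. -/

import Mathlib

open Equiv Equiv.Perm Module Submodule

/-- The subgroup generated by the entries of `L` acts transitively on `Fin n`. -/
def IsTransitiveFamily {n : ℕ} (L : List (Perm (Fin n))) : Prop :=
  ∀ x y : Fin n, ∃ g ∈ Subgroup.closure {τ | τ ∈ L}, g x = y

/-- `L` is a transitive factorization of `σ` into 3-cycles. -/
def IsTransFact3 {n : ℕ} (σ : Perm (Fin n)) (L : List (Perm (Fin n))) : Prop :=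
  (∀ δ ∈ L, δ.IsThreeCycle) ∧ L.prod = σ ∧ IsTransitiveFamily L

/-- The linear map `v ↦ v ∘ π - v`. -/
noncomputable def permF {n : ℕ} (π : Perm (Fin n)) : (Fin n → ℚ) →ₗ[ℚ] (Fin n → ℚ) :=
  LinearMap.funLeft ℚ ℚ π - LinearMap.id

lemma permF_apply {n : ℕ} (π : Perm (Fin n)) (v : Fin n → ℚ) (x : Fin n) :
    permF π v x = v (π x) - v x := rfl

lemma permF_mul {n : ℕ} (δ π : Perm (Fin n)) :
    permF (δ * π) = (LinearMap.funLeft ℚ ℚ π).comp (permF δ) + permF π := by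
  apply LinearMap.ext; intro v; funext x
  simp [permF_apply, LinearMap.funLeft_apply, Equiv.Perm.mul_apply, permF]

lemma permF_one {n : ℕ} : permF (1 : Perm (Fin n)) = 0 := by
  apply LinearMap.ext; intro v; funext x
  simp [permF_apply]

lemma rank_permF_threeCycle {n : ℕ} {δ : Perm (Fin n)} (hδ : δ.IsThreeCycle) :
    finrank ℚ (LinearMap.range (permF δ)) ≤ 2 := by
  classical
  have hcard : δ.support.card = 3 := hδ.card_support
  obtain ⟨a, b, c, hab, hac, hbc, hs⟩ := Finset.card_eq_three.mp hcard
  set u : Fin n → ℚ := Pi.single a 1 - Pi.single c 1 with hu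
  set w : Fin n → ℚ := Pi.single b 1 - Pi.single c 1 with hw
  have hle : LinearMap.range (permF δ) ≤ span ℚ ({u, w} : Set (Fin n → ℚ)) := by
    rintro _ ⟨v, rfl⟩
    have hsupp : ∀ x : Fin n, x ≠ a → x ≠ b → x ≠ c → permF δ v x = 0 := by
      intro x hxa hxb hxc
      have : x ∉ δ.support := by rw [hs]; simp [hxa, hxb, hxc]
      rw [Equiv.Perm.notMem_support] at this
      simp [permF_apply, this]
    have hsum : permF δ v a + permF δ v b + permF δ v c = 0 := by
      have h1 : ∑ x : Fin n, permF δ v x = 0 := by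
        simp only [permF_apply, Finset.sum_sub_distrib]
        rw [Equiv.sum_comp δ v, sub_self]
      have h2 : ∑ x : Fin n, permF δ v x
          = ∑ x ∈ ({a, b, c} : Finset (Fin n)), permF δ v x := by
        apply (Finset.sum_subset (Finset.subset_univ _) ?_).symm
        intro x _ hx
        simp only [Finset.mem_insert, Finset.mem_singleton, not_or] at hx
        exact hsupp x hx.1 hx.2.1 hx.2.2
      rw [h2] at h1
      rw [Finset.sum_insert (by simp [hab, hac]), Finset.sum_insert (by simp [hbc]),
        Finset.sum_singleton] at h1
      linarith [h1]
    have key : permF δ v = (permF δ v a) • u + (permF δ v b) • w := by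
      funext x
      by_cases hxa : x = a
      · subst hxa
        simp [hu, hw, Pi.single_apply, hab, hac, Ne.symm hab]
      by_cases hxb : x = b
      · subst hxb
        simp [hu, hw, Pi.single_apply, Ne.symm hab, hbc]
      by_cases hxc : x = c
      · subst hxc
        simp only [hu, hw, Pi.add_apply, Pi.smul_apply, Pi.sub_apply,
          Pi.single_apply, if_neg (Ne.symm hac), if_neg (Ne.symm hbc), if_pos rfl,
          smul_eq_mul, if_true]
        linarith [hsum]
      · simp [hsupp x hxa hxb hxc, hu, hw, Pi.single_apply, hxa, hxb, hxc]
    rw [key]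
    exact add_mem (smul_mem _ _ (subset_span (by simp))) (smul_mem _ _ (subset_span (by simp)))
  calc finrank ℚ (LinearMap.range (permF δ)) ≤ finrank ℚ (span ℚ ({u, w} : Set (Fin n → ℚ))) :=
        Submodule.finrank_mono hle
    _ ≤ ({u, w} : Set (Fin n → ℚ)).toFinset.card := finrank_span_le_card _
    _ ≤ 2 := by
        rw [Set.toFinset_insert, Set.toFinset_singleton]
        exact (Finset.card_insert_le _ _).trans (by simp)

lemma rank_permF_prod {n : ℕ} (L : List (Perm (Fin n))) (h3 : ∀ δ ∈ L, δ.IsThreeCycle) :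
    finrank ℚ (LinearMap.range (permF L.prod)) ≤ 2 * L.length := by
  induction L with
  | nil => rw [show permF ([] : List (Perm (Fin n))).prod = 0 from permF_one]; simp
  | cons δ L ih =>
    rw [List.prod_cons, permF_mul]
    have hle : LinearMap.range ((LinearMap.funLeft ℚ ℚ ⇑L.prod).comp (permF δ) + permF L.prod)
        ≤ LinearMap.range ((LinearMap.funLeft ℚ ℚ ⇑L.prod).comp (permF δ))
          ⊔ LinearMap.range (permF L.prod) := by
      rintro _ ⟨v, rfl⟩
      exact add_mem (Submodule.mem_sup_left ⟨v, rfl⟩) (Submodule.mem_sup_right ⟨v, rfl⟩)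
    refine (Submodule.finrank_mono hle).trans ?_
    refine (Submodule.finrank_add_le_finrank_add_finrank _ _).trans ?_
    have h1 : finrank ℚ (LinearMap.range ((LinearMap.funLeft ℚ ℚ ⇑L.prod).comp (permF δ))) ≤ 2 := by
      rw [LinearMap.range_comp]
      exact (Submodule.finrank_map_le _ _).trans (rank_permF_threeCycle (h3 δ (by simp)))
    have h2 := ih (fun τ hτ => h3 τ (by simp [hτ]))
    simp only [List.length_cons]
    omega

/-- Existence of factorizations of cycles of odd support cardinality into 3-cycles. -/
lemma exists_threeCycle_fact {n : ℕ} : ∀ (m : ℕ) (σ : Perm (Fin n)), σ.IsCycle →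
    σ.support.card = 2 * m + 3 →
    ∃ L : List (Perm (Fin n)), (∀ δ ∈ L, δ.IsThreeCycle) ∧ L.prod = σ ∧ L.length = m + 1 := by
  intro m
  induction m with
  | zero =>
    intro σ hσ hcard
    refine ⟨[σ], ?_, by simp, rfl⟩
    intro δ hδ
    simp only [List.mem_singleton] at hδ
    subst hδ
    exact card_support_eq_three_iff.mp (by omega)
  | succ m ih =>
    intro σ hσ hcard
    have hne : σ.support.Nonempty := Finset.card_pos.mp (by omega)
    obtain ⟨x, hx⟩ := hne
    have hx' : σ x ≠ x := Equiv.Perm.mem_support.mp hx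
    have horder : orderOf σ = 2 * (m + 1) + 3 := by rw [hσ.orderOf, hcard]
    have hpow : ∀ k : ℕ, 0 < k → k < 5 → σ ^ k ≠ 1 := by
      intro k hk0 hk5 h
      have := orderOf_dvd_of_pow_eq_one h
      rw [horder] at this
      have := Nat.le_of_dvd hk0 this
      omega
    have h2 : σ (σ x) ≠ x := by
      intro h
      refine hpow 2 (by norm_num) (by norm_num) ((hσ.pow_eq_one_iff' hx').mpr ?_)
      simp [pow_succ, Equiv.Perm.mul_apply, h]
    have h3 : σ (σ (σ x)) ≠ x := by
      intro h
      refine hpow 3 (by norm_num) (by norm_num) ((hσ.pow_eq_one_iff' hx').mpr ?_)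
      simp [pow_succ, Equiv.Perm.mul_apply, h]
    set y := σ x with hy
    set z := σ y with hz
    have hyy : σ y ≠ y := Equiv.Perm.mem_support.mp (Equiv.Perm.apply_mem_support.mpr hx)
    have hxy : x ≠ y := Ne.symm hx'
    have hyz : y ≠ z := by rw [hz]; exact Ne.symm hyy
    have hxz : x ≠ z := fun h => h2 h.symm
    -- first peel
    set τ₁ : Perm (Fin n) := Equiv.swap x y * σ with hτ₁
    have hτ₁cyc : τ₁.IsCycle := hσ.swap_mul hx' h2
    have hτ₁supp : τ₁.support = σ.support \ {x} := Equiv.Perm.support_swap_mul_eq σ x h2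
    have hτ₁card : τ₁.support.card = 2 * m + 4 := by
      rw [hτ₁supp, Finset.card_sdiff_of_subset (by simpa using hx), hcard]
      simp; omega
    have hτ₁y : τ₁ y = z := by
      rw [hτ₁, Equiv.Perm.mul_apply, ← hz, Equiv.swap_apply_of_ne_of_ne (Ne.symm hxz) (Ne.symm hyz)]
    have hσz : σ z ≠ x := h3
    have hσzy : σ z ≠ y := fun h => hxz (σ.injective h).symm
    have hτ₁z : τ₁ z = σ z := by
      rw [hτ₁, Equiv.Perm.mul_apply, Equiv.swap_apply_of_ne_of_ne hσz hσzy]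
    have hτ₁yy : τ₁ y ≠ y := by rw [hτ₁y]; exact Ne.symm hyz
    have hτ₁ffy : τ₁ (τ₁ y) ≠ y := by rw [hτ₁y, hτ₁z]; exact hσzy
    -- second peel
    set τ₂ : Perm (Fin n) := Equiv.swap y (τ₁ y) * τ₁ with hτ₂
    have hτ₂cyc : τ₂.IsCycle := hτ₁cyc.swap_mul hτ₁yy hτ₁ffy
    have hτ₂supp : τ₂.support = τ₁.support \ {y} := Equiv.Perm.support_swap_mul_eq τ₁ y hτ₁ffy
    have hyτ₁ : y ∈ τ₁.support := by
      rw [hτ₁supp]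
      simp [Equiv.Perm.mem_support.mpr hyy, hxy.symm, Ne.symm hxy]
    have hτ₂card : τ₂.support.card = 2 * m + 3 := by
      rw [hτ₂supp, Finset.card_sdiff_of_subset (by simpa using hyτ₁), hτ₁card]
      simp
    obtain ⟨L', hL'3, hL'prod, hL'len⟩ := ih τ₂ hτ₂cyc hτ₂card
    refine ⟨(Equiv.swap y x * Equiv.swap y z) :: L', ?_, ?_, by simp [hL'len]⟩
    · intro δ hδ
      rcases List.mem_cons.mp hδ with h | h
      · subst h
        exact isThreeCycle_swap_mul_swap_same (Ne.symm hxy) hyz (hxz)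
      · exact hL'3 δ h
    · rw [List.prod_cons, hL'prod, hτ₂, hτ₁y, hτ₁, Equiv.swap_comm y x, mul_assoc,
        Equiv.swap_mul_self_mul, Equiv.swap_mul_self_mul]

theorem min_threeCycle_factorization_of_n_cycle
    (n : ℕ) (hn : 3 ≤ n) (hodd : Odd n) (σ : Perm (Fin n))
    (hcyc : σ.IsCycle) (hsupp : σ.support.card = n) :
    (∃ L : List (Perm (Fin n)), IsTransFact3 σ L ∧ L.length = (n - 1) / 2) ∧
    (∀ L : List (Perm (Fin n)), IsTransFact3 σ L → (n - 1) / 2 ≤ L.length) := by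
  have huniv : σ.support = Finset.univ :=
    Finset.eq_univ_of_card _ (by rw [hsupp, Fintype.card_fin])
  have hmove : ∀ x : Fin n, σ x ≠ x := fun x =>
    Equiv.Perm.mem_support.mp (huniv ▸ Finset.mem_univ x)
  constructor
  · obtain ⟨k, hk⟩ := hodd
    have hk1 : 1 ≤ k := by omega
    obtain ⟨L, hL3, hLprod, hLlen⟩ := exists_threeCycle_fact (k - 1) σ hcyc (by omega)
    refine ⟨L, ⟨hL3, hLprod, ?_⟩, by omega⟩
    intro x y
    have hσmem : σ ∈ Subgroup.closure {τ | τ ∈ L} := by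
      rw [← hLprod]
      exact Subgroup.list_prod_mem _ (fun τ hτ => Subgroup.subset_closure hτ)
    obtain ⟨i, hi⟩ := hcyc.exists_pow_eq (hmove x) (hmove y)
    exact ⟨σ ^ i, Subgroup.pow_mem _ hσmem i, hi⟩
  · rintro L ⟨hL3, hLprod, -⟩
    have hrank := rank_permF_prod L hL3
    rw [hLprod] at hrank
    have hker : LinearMap.ker (permF σ) ≤ span ℚ {(fun _ => 1 : Fin n → ℚ)} := by
      intro v hv
      rw [LinearMap.mem_ker] at hv
      have hfix : ∀ w : Fin n, v (σ w) = v w := by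
        intro w
        have := congrFun hv w
        rw [permF_apply] at this
        simpa [sub_eq_zero] using this
      have x0 : Fin n := ⟨0, by omega⟩
      have hconst : ∀ w : Fin n, v w = v x0 := by
        intro w
        obtain ⟨i, hi⟩ := hcyc.exists_pow_eq (hmove x0) (hmove w)
        rw [← hi]
        clear hi
        induction i with
        | zero => simp
        | succ i ih =>
          rw [pow_succ', Equiv.Perm.mul_apply, hfix, ih]
      rw [Submodule.mem_span_singleton]
      refine ⟨v x0, ?_⟩
      funext w
      simp [hconst w]
    have hkerrank : finrank ℚ (LinearMap.ker (permF σ)) ≤ 1 := by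
      refine (Submodule.finrank_mono hker).trans ?_
      refine (finrank_span_le_card _).trans ?_
      simp
    have hrn := LinearMap.finrank_range_add_finrank_ker (permF σ)
    have hdim : finrank ℚ (Fin n → ℚ) = n := by simp
    omega
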